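/- Let G₁, G₂ be disjoint graphs with u ∈ V(G₁), v ∈ V(G₂), and let G be obtained by identifying u and v into a vertex w. If D₁ and D₂ are strong dominating sets of G₁ and G₂ respectively, then (D₁ \ {u}) ∪ (D₂ \ {v}) ∪ {w} is a strong dominating set of G; consequently γ_st(G) ≤ γ_st(G₁) + γ_st(G₂) + 1. -/

import Mathlib

open SimpleGraph

/-- The degree of a vertex `v` in the graph `G`. -/
noncomputable def deg {V : Type*} (G : SimpleGraph V) (v : V) : ℕ :=
  (G.neighborSet v).ncard

/-- `D` is a strong dominating set of `G`: every vertex outside `D` has a neighbor in `D`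
of at least its own degree. -/
def IsSDS {V : Type*} (G : SimpleGraph V) (D : Set V) : Prop :=
  ∀ x ∉ D, ∃ y ∈ D, G.Adj x y ∧ deg G x ≤ deg G y

/-- The strong domination number of `G`. -/
noncomputable def gammaSt {V : Type*} (G : SimpleGraph V) : ℕ :=
  sInf {n | ∃ D : Set V, IsSDS G D ∧ D.ncard = n}

/-- The vertex gluing of `G₁` and `G₂`, identifying `u ∈ V₁` with `v ∈ V₂` into the single
vertex `none`. -/
def glueV {V₁ V₂ : Type*} (G₁ : SimpleGraph V₁) (G₂ : SimpleGraph V₂) (u : V₁) (v : V₂) :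
    SimpleGraph (Option ({x : V₁ // x ≠ u} ⊕ {y : V₂ // y ≠ v})) :=
  SimpleGraph.fromRel (fun a b =>
    match a, b with
    | some (.inl a), some (.inl b) => G₁.Adj a.1 b.1
    | some (.inr a), some (.inr b) => G₂.Adj a.1 b.1
    | none, some (.inl b) => G₁.Adj u b.1
    | none, some (.inr b) => G₂.Adj v b.1
    | _, _ => False)

section Aux

variable {V₁ V₂ : Type*} (G₁ : SimpleGraph V₁) (G₂ : SimpleGraph V₂) (u : V₁) (v : V₂)

lemma adj_none_inl (b : {x : V₁ // x ≠ u}) :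
    (glueV G₁ G₂ u v).Adj none (some (.inl b)) ↔ G₁.Adj u b.1 := by
  simp [glueV, fromRel_adj]

lemma adj_none_inr (b : {y : V₂ // y ≠ v}) :
    (glueV G₁ G₂ u v).Adj none (some (.inr b)) ↔ G₂.Adj v b.1 := by
  simp [glueV, fromRel_adj]

lemma adj_inl_inl (a b : {x : V₁ // x ≠ u}) :
    (glueV G₁ G₂ u v).Adj (some (.inl a)) (some (.inl b)) ↔ G₁.Adj a.1 b.1 := by
  constructor
  · rintro ⟨hne, h | h⟩
    · exact h
    · exact h.symm
  · intro h
    refine ⟨?_, Or.inl h⟩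
    intro he
    obtain rfl : a = b := by simpa using he
    exact G₁.loopless.irrefl _ h

lemma adj_inr_inr (a b : {y : V₂ // y ≠ v}) :
    (glueV G₁ G₂ u v).Adj (some (.inr a)) (some (.inr b)) ↔ G₂.Adj a.1 b.1 := by
  constructor
  · rintro ⟨hne, h | h⟩
    · exact h
    · exact h.symm
  · intro h
    refine ⟨?_, Or.inl h⟩
    intro he
    obtain rfl : a = b := by simpa using he
    exact G₂.loopless.irrefl _ h

lemma not_adj_inl_inr (a : {x : V₁ // x ≠ u}) (b : {y : V₂ // y ≠ v}) :
    ¬ (glueV G₁ G₂ u v).Adj (some (.inl a)) (some (.inr b)) := by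
  rintro ⟨hne, h | h⟩ <;> exact h

open Classical in
/-- Embedding of `V₁` into the glued vertex set. -/
noncomputable def f₁ (u : V₁) (v : V₂) (x : V₁) :
    Option ({x : V₁ // x ≠ u} ⊕ {y : V₂ // y ≠ v}) :=
  if h : x = u then none else some (.inl ⟨x, h⟩)

open Classical in
/-- Embedding of `V₂` into the glued vertex set. -/
noncomputable def f₂ (u : V₁) (v : V₂) (y : V₂) :
    Option ({x : V₁ // x ≠ u} ⊕ {y : V₂ // y ≠ v}) :=
  if h : y = v then none else some (.inr ⟨y, h⟩)

lemma f₁_inj : Function.Injective (f₁ u v : V₁ → _) := by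
  intro x y h
  by_cases h1 : x = u <;> by_cases h2 : y = u
  · rw [h1, h2]
  · simp [f₁, h1, h2] at h
  · simp [f₁, h1, h2] at h
  · simpa [f₁, h1, h2] using h

lemma f₂_inj : Function.Injective (f₂ u v : V₂ → _) := by
  intro x y h
  by_cases h1 : x = v <;> by_cases h2 : y = v
  · rw [h1, h2]
  · simp [f₂, h1, h2] at h
  · simp [f₂, h1, h2] at h
  · simpa [f₂, h1, h2] using h

lemma ns_inl (a : {x : V₁ // x ≠ u}) :
    (glueV G₁ G₂ u v).neighborSet (some (.inl a)) = f₁ u v '' G₁.neighborSet a.1 := by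
  ext z
  match z with
  | none =>
    simp only [mem_neighborSet, Set.mem_image, f₁]
    rw [adj_comm, adj_none_inl]
    constructor
    · intro h; exact ⟨u, h.symm, by simp⟩
    · rintro ⟨x, hx, hz⟩
      split_ifs at hz with h
      exact h ▸ hx.symm
  | some (.inl b) =>
    simp only [mem_neighborSet, Set.mem_image, f₁]
    rw [adj_inl_inl]
    constructor
    · intro h; exact ⟨b.1, h, by simp [b.2]⟩
    · rintro ⟨x, hx, hz⟩
      split_ifs at hz with h
      obtain rfl := Sum.inl.inj (Option.some.inj hz)
      exact hx
  | some (.inr b) =>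
    simp only [mem_neighborSet, Set.mem_image, f₁]
    constructor
    · intro h; exact absurd h (not_adj_inl_inr G₁ G₂ u v a b)
    · rintro ⟨x, hx, hz⟩
      split_ifs at hz with h
      simp at hz

lemma ns_inr (b : {y : V₂ // y ≠ v}) :
    (glueV G₁ G₂ u v).neighborSet (some (.inr b)) = f₂ u v '' G₂.neighborSet b.1 := by
  ext z
  match z with
  | none =>
    simp only [mem_neighborSet, Set.mem_image, f₂]
    rw [adj_comm, adj_none_inr]
    constructor
    · intro h; exact ⟨v, h.symm, by simp⟩
    · rintro ⟨x, hx, hz⟩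
      split_ifs at hz with h
      exact h ▸ hx.symm
  | some (.inr a) =>
    simp only [mem_neighborSet, Set.mem_image, f₂]
    rw [adj_inr_inr]
    constructor
    · intro h; exact ⟨a.1, h, by simp [a.2]⟩
    · rintro ⟨x, hx, hz⟩
      split_ifs at hz with h
      obtain rfl := Sum.inr.inj (Option.some.inj hz)
      exact hx
  | some (.inl a) =>
    simp only [mem_neighborSet, Set.mem_image, f₂]
    constructor
    · intro h
      exact absurd ((glueV G₁ G₂ u v).adj_symm h) (not_adj_inl_inr G₁ G₂ u v a b)
    · rintro ⟨x, hx, hz⟩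
      split_ifs at hz with h
      simp at hz

lemma ns_none :
    (glueV G₁ G₂ u v).neighborSet none =
      f₁ u v '' G₁.neighborSet u ∪ f₂ u v '' G₂.neighborSet v := by
  ext z
  match z with
  | none =>
    simp only [mem_neighborSet, Set.mem_union, Set.mem_image, f₁, f₂]
    constructor
    · intro h; exact absurd rfl h.ne
    · rintro (⟨x, hx, hz⟩ | ⟨x, hx, hz⟩) <;>
      · split_ifs at hz with h
        subst h
        exact absurd hx (by simp)
  | some (.inl b) =>
    simp only [mem_neighborSet, Set.mem_union, Set.mem_image, f₁, f₂]
    rw [adj_none_inl]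
    constructor
    · intro h; exact Or.inl ⟨b.1, h, by simp [b.2]⟩
    · rintro (⟨x, hx, hz⟩ | ⟨x, hx, hz⟩) <;> split_ifs at hz with h
      · obtain rfl := Sum.inl.inj (Option.some.inj hz)
        exact hx
      · simp at hz
  | some (.inr b) =>
    simp only [mem_neighborSet, Set.mem_union, Set.mem_image, f₁, f₂]
    rw [adj_none_inr]
    constructor
    · intro h; exact Or.inr ⟨b.1, h, by simp [b.2]⟩
    · rintro (⟨x, hx, hz⟩ | ⟨x, hx, hz⟩) <;> split_ifs at hz with h
      · simp at hz
      · obtain rfl := Sum.inr.inj (Option.some.inj hz)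
        exact hx

lemma deg_inl (a : {x : V₁ // x ≠ u}) :
    deg (glueV G₁ G₂ u v) (some (.inl a)) = deg G₁ a.1 := by
  rw [deg, ns_inl, Set.ncard_image_of_injective _ (f₁_inj u v), deg]

lemma deg_inr (b : {y : V₂ // y ≠ v}) :
    deg (glueV G₁ G₂ u v) (some (.inr b)) = deg G₂ b.1 := by
  rw [deg, ns_inr, Set.ncard_image_of_injective _ (f₂_inj u v), deg]

lemma deg_none [Fintype V₁] [Fintype V₂] :
    deg (glueV G₁ G₂ u v) (none : Option ({x : V₁ // x ≠ u} ⊕ {y : V₂ // y ≠ v}))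
      = deg G₁ u + deg G₂ v := by
  rw [deg, ns_none, Set.ncard_union_eq, Set.ncard_image_of_injective _ (f₁_inj u v),
    Set.ncard_image_of_injective _ (f₂_inj u v), deg, deg]
  rw [Set.disjoint_left]
  rintro z ⟨x, hx, rfl⟩ ⟨y, hy, hz⟩
  have hxu : x ≠ u := fun h => G₁.loopless.irrefl u (h ▸ hx)
  have hyv : y ≠ v := fun h => G₂.loopless.irrefl v (h ▸ hy)
  simp [f₁, f₂, hxu, hyv] at hz

end Aux

lemma glue_sds {V₁ V₂ : Type*} [Fintype V₁] [Fintype V₂]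
    (G₁ : SimpleGraph V₁) (G₂ : SimpleGraph V₂) (u : V₁) (v : V₂)
    (D₁ : Set V₁) (D₂ : Set V₂) (h₁ : IsSDS G₁ D₁) (h₂ : IsSDS G₂ D₂) :
    IsSDS (glueV G₁ G₂ u v)
      {z | z = none ∨ (∃ a, ∃ h : a ≠ u, a ∈ D₁ ∧ z = some (.inl ⟨a, h⟩)) ∨
        (∃ b, ∃ h : b ≠ v, b ∈ D₂ ∧ z = some (.inr ⟨b, h⟩))} := by
  intro x hx
  match x with
  | none => exact absurd (Or.inl rfl) hx
  | some (.inl ⟨a, ha⟩) =>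
    have haD : a ∉ D₁ := by
      intro h
      exact hx (Or.inr (Or.inl ⟨a, ha, h, rfl⟩))
    obtain ⟨y, hyD, hady, hdeg⟩ := h₁ a haD
    by_cases hyu : y = u
    · rw [hyu] at hady hdeg
      refine ⟨none, Or.inl rfl, ?_, ?_⟩
      · exact ((glueV G₁ G₂ u v).adj_symm ((adj_none_inl G₁ G₂ u v ⟨a, ha⟩).2 hady.symm))
      · rw [deg_inl, deg_none]
        exact le_trans hdeg (Nat.le_add_right _ _)
    · refine ⟨some (.inl ⟨y, hyu⟩), Or.inr (Or.inl ⟨y, hyu, hyD, rfl⟩), ?_, ?_⟩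
      · exact (adj_inl_inl G₁ G₂ u v ⟨a, ha⟩ ⟨y, hyu⟩).2 hady
      · rw [deg_inl, deg_inl]; exact hdeg
  | some (.inr ⟨b, hb⟩) =>
    have hbD : b ∉ D₂ := by
      intro h
      exact hx (Or.inr (Or.inr ⟨b, hb, h, rfl⟩))
    obtain ⟨y, hyD, hady, hdeg⟩ := h₂ b hbD
    by_cases hyv : y = v
    · rw [hyv] at hady hdeg
      refine ⟨none, Or.inl rfl, ?_, ?_⟩
      · exact ((glueV G₁ G₂ u v).adj_symm ((adj_none_inr G₁ G₂ u v ⟨b, hb⟩).2 hady.symm))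
      · rw [deg_inr, deg_none]
        exact le_trans hdeg (Nat.le_add_left _ _)
    · refine ⟨some (.inr ⟨y, hyv⟩), Or.inr (Or.inr ⟨y, hyv, hyD, rfl⟩), ?_, ?_⟩
      · exact (adj_inr_inr G₁ G₂ u v ⟨b, hb⟩ ⟨y, hyv⟩).2 hady
      · rw [deg_inr, deg_inr]; exact hdeg

/-- If `D₁`, `D₂` are strong dominating sets of `G₁`, `G₂`, then
`(D₁ \ {u}) ∪ (D₂ \ {v}) ∪ {w}` (where `w = none` is the glued vertex) is a strong
dominating set of the vertex gluing; consequently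
`γ_st(G) ≤ γ_st(G₁) + γ_st(G₂) + 1`. -/
theorem stmt_16 {V₁ V₂ : Type*} [Fintype V₁] [Fintype V₂]
    (G₁ : SimpleGraph V₁) (G₂ : SimpleGraph V₂) (u : V₁) (v : V₂)
    (D₁ : Set V₁) (D₂ : Set V₂) (h₁ : IsSDS G₁ D₁) (h₂ : IsSDS G₂ D₂) :
    IsSDS (glueV G₁ G₂ u v)
      {z | z = none ∨ (∃ a, ∃ h : a ≠ u, a ∈ D₁ ∧ z = some (.inl ⟨a, h⟩)) ∨
        (∃ b, ∃ h : b ≠ v, b ∈ D₂ ∧ z = some (.inr ⟨b, h⟩))} ∧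
    gammaSt (glueV G₁ G₂ u v) ≤ gammaSt G₁ + gammaSt G₂ + 1 := by
  refine ⟨glue_sds G₁ G₂ u v D₁ D₂ h₁ h₂, ?_⟩
  -- pick optimal strong dominating sets
  have hne₁ : {n | ∃ D : Set V₁, IsSDS G₁ D ∧ D.ncard = n}.Nonempty :=
    ⟨(Set.univ : Set V₁).ncard, Set.univ, fun x hx => absurd (Set.mem_univ x) hx, rfl⟩
  have hne₂ : {n | ∃ D : Set V₂, IsSDS G₂ D ∧ D.ncard = n}.Nonempty :=
    ⟨(Set.univ : Set V₂).ncard, Set.univ, fun x hx => absurd (Set.mem_univ x) hx, rfl⟩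
  obtain ⟨E₁, hE₁, hc₁⟩ := Nat.sInf_mem hne₁
  obtain ⟨E₂, hE₂, hc₂⟩ := Nat.sInf_mem hne₂
  set S : Set (Option ({x : V₁ // x ≠ u} ⊕ {y : V₂ // y ≠ v})) :=
    {z | z = none ∨ (∃ a, ∃ h : a ≠ u, a ∈ E₁ ∧ z = some (.inl ⟨a, h⟩)) ∨
        (∃ b, ∃ h : b ≠ v, b ∈ E₂ ∧ z = some (.inr ⟨b, h⟩))} with hS
  have hsub : S ⊆ insert none (f₁ u v '' E₁ ∪ f₂ u v '' E₂) := by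
    rintro z (rfl | ⟨a, h, haE, rfl⟩ | ⟨b, h, hbE, rfl⟩)
    · exact Set.mem_insert _ _
    · exact Set.mem_insert_of_mem _ (Or.inl ⟨a, haE, by simp [f₁, h]⟩)
    · exact Set.mem_insert_of_mem _ (Or.inr ⟨b, hbE, by simp [f₂, h]⟩)
  have hcard : S.ncard ≤ gammaSt G₁ + gammaSt G₂ + 1 := by
    calc S.ncard ≤ (insert none (f₁ u v '' E₁ ∪ f₂ u v '' E₂)).ncard :=
          Set.ncard_le_ncard hsub (Set.toFinite _)
      _ ≤ (f₁ u v '' E₁ ∪ f₂ u v '' E₂).ncard + 1 := Set.ncard_insert_le _ _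
      _ ≤ ((f₁ u v '' E₁).ncard + (f₂ u v '' E₂).ncard) + 1 := by
          have := Set.ncard_union_le (f₁ u v '' E₁) (f₂ u v '' E₂)
          omega
      _ = (E₁.ncard + E₂.ncard) + 1 := by
          rw [Set.ncard_image_of_injective _ (f₁_inj u v),
            Set.ncard_image_of_injective _ (f₂_inj u v)]
      _ = gammaSt G₁ + gammaSt G₂ + 1 := by rw [hc₁, hc₂]; rfl
  exact le_trans (Nat.sInf_le ⟨S, glue_sds G₁ G₂ u v E₁ E₂ hE₁ hE₂, rfl⟩) hcard
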